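/- If F : H → ℝ is differentiable with L-Lipschitz gradient, X* = argmin F ≠ ∅, and F satisfies the error-bound condition η·dist(x, X*) ≤ ‖∇F(x)‖ for all x ∈ H with some η > 0, then F satisfies the Polyak-Łojasiewicz condition with parameter μ = η²/L. -/

import Mathlib

open InnerProductSpace Set

local notation "⟪" x ", " y "⟫" => @inner ℝ _ _ x y

/-- Descent lemma. -/
theorem descent_lemma {H : Type*} [NormedAddCommGroup H] [InnerProductSpace ℝ H]
    [CompleteSpace H]
    (F : H → ℝ) (F' : H → H) (hdiff : ∀ x, HasGradientAt F (F' x) x)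
    (L : ℝ) (hL : 0 < L) (hlip : LipschitzWith (Real.toNNReal L) F')
    (x y : H) : F y ≤ F x + ⟪F' x, y - x⟫ + L / 2 * ‖y - x‖ ^ 2 := by
  set v := y - x with hv
  set φ : ℝ → ℝ := fun t => F (x + t • v) - t * ⟪F' x, v⟫ - L / 2 * t ^ 2 * ‖v‖ ^ 2 with hφ
  have hline : ∀ t : ℝ, HasDerivAt (fun t : ℝ => x + t • v) v t := by
    intro t
    simpa using ((hasDerivAt_id t).smul_const v).const_add x
  have hFline : ∀ t : ℝ, HasDerivAt (fun t : ℝ => F (x + t • v))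
      ⟪F' (x + t • v), v⟫ t := by
    intro t
    have h1 := (hdiff (x + t • v)).hasFDerivAt.comp_hasDerivAt t (hline t)
    exact h1
  have hφ' : ∀ t : ℝ, HasDerivAt φ
      (⟪F' (x + t • v), v⟫ - ⟪F' x, v⟫ - L * t * ‖v‖ ^ 2) t := by
    intro t
    have h2 : HasDerivAt (fun t : ℝ => t * ⟪F' x, v⟫) ⟪F' x, v⟫ t := by
      simpa using (hasDerivAt_id t).mul_const ⟪F' x, v⟫
    have h3 : HasDerivAt (fun t : ℝ => L / 2 * t ^ 2 * ‖v‖ ^ 2) (L * t * ‖v‖ ^ 2) t := by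
      have := ((hasDerivAt_pow 2 t).const_mul (L / 2)).mul_const (‖v‖ ^ 2)
      have e : L / 2 * (((2:ℕ):ℝ) * t ^ (2 - 1)) * ‖v‖ ^ 2 = L * t * ‖v‖ ^ 2 := by
        push_cast; ring
      rw [e] at this
      exact this
    exact ((hFline t).sub h2).sub h3
  have hderiv_nonpos : ∀ t ∈ Set.Icc (0:ℝ) 1,
      ⟪F' (x + t • v), v⟫ - ⟪F' x, v⟫ - L * t * ‖v‖ ^ 2 ≤ 0 := by
    intro t ht
    have h1 : ⟪F' (x + t • v) - F' x, v⟫ ≤ ‖F' (x + t • v) - F' x‖ * ‖v‖ :=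
      real_inner_le_norm _ _
    have h2 : ‖F' (x + t • v) - F' x‖ ≤ L * (t * ‖v‖) := by
      have h := hlip.dist_le_mul (x + t • v) x
      rw [dist_eq_norm, dist_eq_norm] at h
      simp only [add_sub_cancel_left] at h
      rw [norm_smul, Real.norm_eq_abs, abs_of_nonneg ht.1] at h
      calc ‖F' (x + t • v) - F' x‖ ≤ L.toNNReal * (t * ‖v‖) := h
        _ = L * (t * ‖v‖) := by rw [Real.coe_toNNReal _ hL.le]
    have h3 : ⟪F' (x + t • v), v⟫ - ⟪F' x, v⟫ = ⟪F' (x + t • v) - F' x, v⟫ :=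
      (inner_sub_left _ _ _).symm
    rw [sub_nonpos, h3]
    nlinarith [norm_nonneg v, norm_nonneg (F' (x + t • v) - F' x)]
  have hmono : AntitoneOn φ (Set.Icc 0 1) := by
    apply antitoneOn_of_deriv_nonpos (convex_Icc 0 1)
    · have : ∀ t : ℝ, DifferentiableAt ℝ φ t := fun t => (hφ' t).differentiableAt
      exact (Differentiable.continuous this).continuousOn
    · intro t ht
      exact ((hφ' t).differentiableAt).differentiableWithinAt
    · intro t ht
      rw [(hφ' t).deriv]
      exact hderiv_nonpos t (interior_subset ht)
  have h01 := hmono (Set.left_mem_Icc.mpr zero_le_one) (Set.right_mem_Icc.mpr zero_le_one) zero_le_one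
  simp only [hφ] at h01
  simp only [zero_smul, add_zero, one_smul, zero_mul, sub_zero, mul_zero, zero_pow,
    one_pow, mul_one, one_mul] at h01
  have : x + v = y := by rw [hv]; abel
  rw [this] at h01
  linarith

/-- The error-bound condition implies the Polyak-Łojasiewicz condition
with parameter μ = η²/L. -/
theorem eb_implies_pl {H : Type*} [NormedAddCommGroup H] [InnerProductSpace ℝ H]
    [CompleteSpace H]
    (F : H → ℝ) (F' : H → H) (hdiff : ∀ x, HasGradientAt F (F' x) x)
    (L : ℝ) (hL : 0 < L) (hlip : LipschitzWith (Real.toNNReal L) F')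
    (Xs : Set H) (hXs : Xs = {x | ∀ y, F x ≤ F y}) (hne : Xs.Nonempty)
    (Fstar : ℝ) (hFstar : ∀ x ∈ Xs, F x = Fstar)
    (η : ℝ) (hη : 0 < η)
    (heb : ∀ x, η * Metric.infDist x Xs ≤ ‖F' x‖) :
    ∀ x, F x - Fstar ≤ 1 / (2 * (η ^ 2 / L)) * ‖F' x‖ ^ 2 := by
  intro x
  -- gradient vanishes on Xs
  have hgrad0 : ∀ z ∈ Xs, F' z = 0 := by
    intro z hz
    rw [hXs] at hz
    have hmin : IsLocalMin F z := (isMinOn_univ_iff.mpr hz).isLocalMin (by simp)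
    have h0 := hmin.hasFDerivAt_eq_zero (hdiff z).hasFDerivAt
    exact (InnerProductSpace.toDual ℝ H).injective (by rw [h0, map_zero])
  set d := Metric.infDist x Xs with hd
  have hd0 : 0 ≤ d := Metric.infDist_nonneg
  -- quadratic growth above the level
  have key : ∀ t, d < t → F x - Fstar ≤ L / 2 * t ^ 2 := by
    intro t ht
    obtain ⟨z, hzXs, hzd⟩ := (Metric.infDist_lt_iff hne).mp ht
    have hdes := descent_lemma F F' hdiff L hL hlip z x
    rw [hgrad0 z hzXs] at hdes
    simp only [inner_zero_left, add_zero] at hdes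
    have hnorm : ‖x - z‖ < t := by rwa [← dist_eq_norm]
    have h2 : L / 2 * ‖x - z‖ ^ 2 ≤ L / 2 * t ^ 2 := by
      have h3 : ‖x - z‖ ^ 2 ≤ t ^ 2 := by nlinarith [norm_nonneg (x - z)]
      nlinarith
    have := hFstar z hzXs
    linarith
  have hquad : F x - Fstar ≤ L / 2 * d ^ 2 := by
    have hcont : Filter.Tendsto (fun t : ℝ => L / 2 * t ^ 2) (nhdsWithin d (Set.Ioi d))
        (nhds (L / 2 * d ^ 2)) :=
      ((continuous_const.mul (continuous_pow 2)).tendsto d).mono_left nhdsWithin_le_nhds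
    refine ge_of_tendsto hcont ?_
    filter_upwards [self_mem_nhdsWithin] with t ht
    exact key t ht
  have hdle : d ≤ ‖F' x‖ / η := by
    have := heb x
    rw [← hd] at this
    rw [le_div_iff₀ hη]; linarith
  have h5 : L / 2 * d ^ 2 ≤ L / 2 * (‖F' x‖ / η) ^ 2 := by
    have : d ^ 2 ≤ (‖F' x‖ / η) ^ 2 := by nlinarith
    nlinarith
  have h6 : L / 2 * (‖F' x‖ / η) ^ 2 = 1 / (2 * (η ^ 2 / L)) * ‖F' x‖ ^ 2 := by
    field_simp
  linarith [hquad, h5, h6.le]
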